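/- In a one-issue election with n voters of which n₁ (1 ≤ n₁ ≤ n/2) prefer alternative 1 and the rest prefer alternative 0, the random dictator rule (pick a uniformly random voter and output their preference) has expected social cost equal to (2 − 2n₁/n) times the optimal social cost n₁; consequently its worst-case approximation ratio over all one-issue profiles with n voters equals 2 − 2/n. -/

import Mathlib

open Finset BigOperators

noncomputable section

/-- Hamming distance between two preference vectors over `m` binary issues. -/
def hamming {m : ℕ} (x y : Fin m → Bool) : ℕ :=
  (Finset.univ.filter fun j => x j ≠ y j).card

/-- Social cost of outcome `z` on profile `X`: sum of Hamming distances. -/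
def SC {n m : ℕ} (X : Fin n → Fin m → Bool) (z : Fin m → Bool) : ℕ :=
  ∑ i, hamming (X i) z

/-- Optimal (minimal) social cost over all outcomes. -/
def optCost {n m : ℕ} (X : Fin n → Fin m → Bool) : ℕ :=
  Finset.univ.inf' Finset.univ_nonempty fun z : Fin m → Bool => SC X z

/-- Number of voters preferring alternative 1 (`true`) on issue `j`. -/
def trueCount {n m : ℕ} (X : Fin n → Fin m → Bool) (j : Fin m) : ℕ :=
  (Finset.univ.filter fun i => X i j = true).card

/-- Number of voters preferring alternative 0 (`false`) on issue `j`. -/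
def falseCount {n m : ℕ} (X : Fin n → Fin m → Bool) (j : Fin m) : ℕ :=
  (Finset.univ.filter fun i => X i j = false).card

/-- Expected social cost of `k`-sortition: a uniformly random committee of size `k`
decides each issue by simple majority, ties broken uniformly at random. -/
def sortitionCost (k : ℕ) {n m : ℕ} (X : Fin n → Fin m → Bool) : ℝ :=
  (∑ C ∈ Finset.powersetCard k (Finset.univ : Finset (Fin n)), ∑ j : Fin m,
      (if k < 2 * (C.filter fun i => X i j = true).card then (falseCount X j : ℝ)
       else if 2 * (C.filter fun i => X i j = true).card < k then (trueCount X j : ℝ)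
       else (n : ℝ) / 2)) / (n.choose k : ℝ)

/-- Ratio of an (expected) cost to the optimal cost, with the convention `0/0 = 1`. -/
def ratio (cost : ℝ) (opt : ℕ) : ℝ := if opt = 0 then 1 else cost / (opt : ℝ)

/-- Worst-case approximation ratio of `k`-sortition over profiles with `n` voters, `m` issues. -/
def sortitionAR (n m k : ℕ) : ℝ :=
  ⨆ X : Fin n → Fin m → Bool, ratio (sortitionCost k X) (optCost X)

/-- The set of committee members of `C` closest (in Hamming distance) to voter `i`. -/
def closestSet {n m : ℕ} (X : Fin n → Fin m → Bool) (C : Finset (Fin n)) (i : Fin n) :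
    Finset (Fin n) :=
  C.filter fun c => ∀ c' ∈ C, hamming (X i) (X c) ≤ hamming (X i) (X c')

/-- Weight of committee member `c`: each voter splits one unit of weight equally among
their closest committee members. -/
def wWeight {n m : ℕ} (X : Fin n → Fin m → Bool) (C : Finset (Fin n)) (c : Fin n) : ℝ :=
  ∑ i : Fin n, if c ∈ closestSet X C i then 1 / ((closestSet X C i).card : ℝ) else 0

/-- Expected social cost of the decision of committee `C` under weighted majority
(per issue, ties broken uniformly). -/
def wCost {n m : ℕ} (X : Fin n → Fin m → Bool) (C : Finset (Fin n)) : ℝ :=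
  ∑ j : Fin m,
    (if (∑ c ∈ C.filter (fun c => X c j = false), wWeight X C c)
          < (∑ c ∈ C.filter (fun c => X c j = true), wWeight X C c)
        then (falseCount X j : ℝ)
     else if (∑ c ∈ C.filter (fun c => X c j = true), wWeight X C c)
          < (∑ c ∈ C.filter (fun c => X c j = false), wWeight X C c)
        then (trueCount X j : ℝ)
     else (n : ℝ) / 2)

/-- Expected social cost of weighted `k`-sortition: uniformly random committee of size `k`,
weighted majority vote per issue. -/
def wSortitionCost (k : ℕ) {n m : ℕ} (X : Fin n → Fin m → Bool) : ℝ :=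
  (∑ C ∈ Finset.powersetCard k (Finset.univ : Finset (Fin n)), wCost X C) / (n.choose k : ℝ)

/-- Worst-case approximation ratio of weighted `k`-sortition. -/
def wSortitionAR (n m k : ℕ) : ℝ :=
  ⨆ X : Fin n → Fin m → Bool, ratio (wSortitionCost k X) (optCost X)


/-- Expected social cost of the random dictator rule. -/
def rdCost {n m : ℕ} (X : Fin n → Fin m → Bool) : ℝ :=
  (∑ i : Fin n, (SC X (X i) : ℝ)) / n

/-- Worst-case approximation ratio of the random dictator rule. -/
def rdAR (n m : ℕ) : ℝ :=
  ⨆ X : Fin n → Fin m → Bool, ratio (rdCost X) (optCost X)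

lemma hamming1 (x y : Fin 1 → Bool) : hamming x y = if x 0 = y 0 then 0 else 1 := by
  rw [hamming, Finset.univ_unique, Finset.filter_singleton]
  simp only [Fin.default_eq_zero]
  by_cases h : x 0 = y 0 <;> simp [h]

lemma SC_eq {n : ℕ} (X : Fin n → Fin 1 → Bool) (z : Fin 1 → Bool) :
    SC X z = if z 0 = true then falseCount X 0 else trueCount X 0 := by
  have h1 : SC X z = ∑ i, if X i 0 = z 0 then 0 else 1 :=
    Finset.sum_congr rfl fun i _ => hamming1 _ _
  rw [h1]
  cases h : z 0
  · rw [if_neg (by simp [h]), trueCount, Finset.card_filter]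
    exact Finset.sum_congr rfl fun i _ => by cases hx : X i 0 <;> simp [hx, h]
  · rw [if_pos (by simp [h]), falseCount, Finset.card_filter]
    exact Finset.sum_congr rfl fun i _ => by cases hx : X i 0 <;> simp [hx, h]

lemma counts {n : ℕ} (X : Fin n → Fin 1 → Bool) : trueCount X 0 + falseCount X 0 = n := by
  rw [trueCount, falseCount]
  have := Finset.card_filter_add_card_filter_not (s := (univ : Finset (Fin n)))
    (p := fun i => X i 0 = true)
  simpa [Bool.not_eq_true] using this

lemma opt_eq {n : ℕ} (X : Fin n → Fin 1 → Bool) :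
    optCost X = min (trueCount X 0) (falseCount X 0) := by
  refine le_antisymm (le_min ?_ ?_) (Finset.le_inf' _ _ fun z _ => ?_)
  · calc optCost X ≤ SC X (fun _ => false) := Finset.inf'_le _ (mem_univ _)
      _ = trueCount X 0 := by rw [SC_eq]; simp
  · calc optCost X ≤ SC X (fun _ => true) := Finset.inf'_le _ (mem_univ _)
      _ = falseCount X 0 := by rw [SC_eq]; simp
  · rw [SC_eq]
    split_ifs
    exacts [min_le_right _ _, min_le_left _ _]

lemma rd_eq {n : ℕ} (X : Fin n → Fin 1 → Bool) :
    rdCost X = 2 * (trueCount X 0 : ℝ) * (falseCount X 0) / n := by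
  rw [rdCost]
  congr 1
  have h1 : ∀ i ∈ (univ : Finset (Fin n)), (SC X (X i) : ℝ)
      = if X i 0 = true then (falseCount X 0 : ℝ) else (trueCount X 0 : ℝ) := by
    intro i _
    rw [SC_eq, apply_ite (Nat.cast : ℕ → ℝ)]
  rw [Finset.sum_congr rfl h1, Finset.sum_ite, Finset.sum_const, Finset.sum_const]
  simp only [nsmul_eq_mul, Bool.not_eq_true]
  rw [← trueCount, ← falseCount]
  ring

lemma ratio_le {n : ℕ} (hn : 2 ≤ n) (X : Fin n → Fin 1 → Bool) :
    ratio (rdCost X) (optCost X) ≤ 2 - 2 / (n : ℝ) := by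
  have hn0 : (0 : ℝ) < n := by positivity
  set t := trueCount X 0 with ht
  set f := falseCount X 0 with hf
  have htf : t + f = n := counts X
  rw [ratio, opt_eq X, rd_eq X, ← ht, ← hf]
  split_ifs with h
  · have : (2 : ℝ) / n ≤ 1 := by
      rw [div_le_one hn0]; exact_mod_cast hn.trans (le_refl n)
    linarith
  · have hmin : 1 ≤ min t f := Nat.one_le_iff_ne_zero.mpr h
    have hmax : max t f + 1 ≤ n := by
      rcases le_total t f with h' | h' <;>
        simp only [min_eq_left, min_eq_right, max_eq_left, max_eq_right, h'] at hmin ⊢ <;> omega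
    have hmm : (t : ℝ) * f = (min t f : ℕ) * (max t f : ℕ) := by
      exact_mod_cast (min_mul_max t f).symm
    have hm0 : ((min t f : ℕ) : ℝ) ≠ 0 := Nat.cast_ne_zero.mpr h
    have key : 2 * (t : ℝ) * f / n / (min t f : ℕ) = 2 * (max t f : ℕ) / n := by
      rw [div_div]
      rw [mul_assoc, hmm, show (2:ℝ) * ((min t f :ℕ) * (max t f:ℕ)) = 2 * (max t f:ℕ) * (min t f:ℕ) by ring,
        show (n:ℝ) * (min t f:ℕ) = (n:ℝ) * (min t f:ℕ) from rfl]
      rw [mul_div_mul_right _ _ hm0]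
    rw [key]
    have h1 : ((max t f : ℕ) : ℝ) ≤ (n : ℝ) - 1 := by
      have : ((max t f : ℕ) : ℝ) + 1 ≤ n := by exact_mod_cast hmax
      linarith
    calc 2 * ((max t f : ℕ) : ℝ) / n ≤ 2 * ((n:ℝ) - 1) / n := by gcongr
      _ = 2 - 2 / n := by field_simp

theorem stmt1 (n : ℕ) (hn : 2 ≤ n) :
    (∀ (X : Fin n → Fin 1 → Bool) (n₁ : ℕ), n₁ = trueCount X 0 → 1 ≤ n₁ → 2 * n₁ ≤ n →
      rdCost X = (2 - 2 * (n₁ : ℝ) / n) * n₁ ∧ optCost X = n₁) ∧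
    rdAR n 1 = 2 - 2 / n := by
  have hn0 : (n : ℝ) ≠ 0 := by positivity
  have part1 : ∀ (X : Fin n → Fin 1 → Bool) (n₁ : ℕ), n₁ = trueCount X 0 → 1 ≤ n₁ → 2 * n₁ ≤ n →
      rdCost X = (2 - 2 * (n₁ : ℝ) / n) * n₁ ∧ optCost X = n₁ := by
    intro X n₁ h1 h2 h3
    have htf := counts X
    have hfc : falseCount X 0 = n - n₁ := by omega
    constructor
    · rw [rd_eq, ← h1, hfc]
      have hc : ((n - n₁ : ℕ) : ℝ) = (n : ℝ) - n₁ := by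
        push_cast [Nat.cast_sub (by omega : n₁ ≤ n)]; ring
      rw [hc]
      field_simp
    · rw [opt_eq, ← h1, hfc, min_eq_left (by omega)]
  refine ⟨part1, ?_⟩
  haveI : NeZero n := ⟨by omega⟩
  set X₀ : Fin n → Fin 1 → Bool := fun i _ => decide (i = 0) with hX0
  have ht0 : trueCount X₀ 0 = 1 := by
    simp [trueCount, hX0, Finset.filter_eq']
  have hrat : ratio (rdCost X₀) (optCost X₀) = 2 - 2 / (n : ℝ) := by
    obtain ⟨hc, ho⟩ := part1 X₀ 1 ht0.symm le_rfl (by omega)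
    rw [ratio, ho, if_neg one_ne_zero, hc]
    push_cast
    field_simp
  rw [rdAR]
  apply le_antisymm
  · exact ciSup_le fun X => ratio_le hn X
  · rw [← hrat]
    exact le_ciSup (f := fun X : Fin n → Fin 1 → Bool => ratio (rdCost X) (optCost X))
      (Set.Finite.bddAbove (Set.finite_range _)) X₀


end
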